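/- arXiv:2212.13907 — 3 statements merged into one kernel-verified Lean document; each statement's English description precedes it below -/
import Mathlib

section
/- Dilation covariance of the LCST: for λ > 0 and f ∈ L²(ℝ), (S^{M₁,M₂}_ψ δ_λ f)(a,b) = (S^{M̃₁,M₂}_ψ f)(a/λ, bλ), where (δ_λ f)(t) = f(λt) and M̃₁ = (A₁/λ², B₁; C₁, D₁λ²). -/
open MeasureTheory Set

noncomputable def lctKernel (A B D : ℝ) (t ξ : ℝ) : ℂ :=
  (1 / (2 * Real.pi * Complex.I * (B : ℂ)) ^ ((1:ℂ)/2)) *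
    Complex.exp (Complex.I / 2 * ((A / B * t ^ 2 - 2 / B * ξ * t + D / B * ξ ^ 2 : ℝ) : ℂ))

/-- The linear canonical transform (for `B ≠ 0`). -/
noncomputable def LCT (A B D : ℝ) (f : ℝ → ℂ) (ξ : ℝ) : ℂ :=
  ∫ t : ℝ, f t * lctKernel A B D t ξ

/-- The analyzing window `ψ^{M₁,M₂}_{a,b}` of the linear canonical Stockwell transform. -/
noncomputable def lcstWave (A₁ B₁ A₂ B₂ : ℝ) (ψ : ℝ → ℂ) (a b t : ℝ) : ℂ :=
  Complex.exp (Complex.I *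
      ((-(A₁ / (2 * B₁)) * (t ^ 2 - b ^ 2) + A₂ / (2 * B₂) * (a * (t - b)) ^ 2 + a * t / B₁ : ℝ) : ℂ)) *
    (a : ℂ) * ψ (a * (t - b))

/-- The linear canonical Stockwell transform. -/
noncomputable def LCST (A₁ B₁ A₂ B₂ : ℝ) (ψ f : ℝ → ℂ) (a b : ℝ) : ℂ :=
  ∫ t : ℝ, f t * (starRingEnd ℂ) (lcstWave A₁ B₁ A₂ B₂ ψ a b t)

/-- Dilation covariance of the LCST. -/
theorem lcst_dilation (A₁ B₁ C₁ D₁ A₂ B₂ C₂ D₂ : ℝ)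
    (hdet₁ : A₁ * D₁ - B₁ * C₁ = 1) (hdet₂ : A₂ * D₂ - B₂ * C₂ = 1)
    (hB₁ : B₁ ≠ 0) (hB₂ : B₂ ≠ 0)
    (f ψ : ℝ → ℂ) (hf : MemLp f 2 (volume : Measure ℝ)) (hψ : MemLp ψ 2 (volume : Measure ℝ))
    (l : ℝ) (hl : 0 < l) (a b : ℝ) (ha : 0 < a) :
    LCST A₁ B₁ A₂ B₂ ψ (fun t => f (l * t)) a b =
      LCST (A₁ / l ^ 2) B₁ A₂ B₂ ψ f (a / l) (b * l) := by
  have hl0 : l ≠ 0 := hl.ne'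
  have key : ∀ t : ℝ, f (l * t) * (starRingEnd ℂ) (lcstWave A₁ B₁ A₂ B₂ ψ a b t)
      = (l : ℂ) * (f (l * t) *
        (starRingEnd ℂ) (lcstWave (A₁ / l ^ 2) B₁ A₂ B₂ ψ (a / l) (b * l) (l * t))) := by
    intro t
    unfold lcstWave
    have harg : a / l * (l * t - b * l) = a * (t - b) := by field_simp
    have hph : (-(A₁ / l ^ 2 / (2 * B₁)) * ((l * t) ^ 2 - (b * l) ^ 2)
        + A₂ / (2 * B₂) * (a * (t - b)) ^ 2 + a / l * (l * t) / B₁)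
        = (-(A₁ / (2 * B₁)) * (t ^ 2 - b ^ 2) + A₂ / (2 * B₂) * (a * (t - b)) ^ 2 + a * t / B₁) := by
      field_simp
    rw [harg, hph]
    simp only [map_mul, Complex.conj_ofReal]
    push_cast
    have hlc : (l : ℂ) ≠ 0 := Complex.ofReal_ne_zero.2 hl0
    ring_nf
    rw [mul_assoc _ (l:ℂ) _, mul_inv_cancel₀ hlc, mul_one]
  unfold LCST
  simp_rw [key]
  rw [integral_const_mul, MeasureTheory.Measure.integral_comp_mul_left
    (fun s => f s * (starRingEnd ℂ) (lcstWave (A₁ / l ^ 2) B₁ A₂ B₂ ψ (a / l) (b * l) s)) l,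
    abs_of_pos (inv_pos.2 hl)]
  simp [Complex.real_smul, ← mul_assoc, mul_inv_cancel₀ (Complex.ofReal_ne_zero.2 hl0)]
end

section
/- Translation covariance of the LCST: for y ∈ ℝ, (S^{M₁,M₂}_ψ τ_y f)(a,b) = e^{−iay/B₁ − (iA₁/B₁) y(b−y)} (S^{M₁,M₂}_ψ {e^{(iA₁/B₁) yt} f(t)})(a, b−y), where (τ_y f)(t) = f(t−y). -/
open MeasureTheory Set

private lemma exp_aux (z A W : ℂ) (p c t q : ℝ) (h : c + t = q - p) :
    z * (Complex.exp (-(Complex.I * p)) * A * W) =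
      Complex.exp (Complex.I * c) *
        (Complex.exp (Complex.I * t) * z * (Complex.exp (-(Complex.I * q)) * A * W)) := by
  have h2 : Complex.exp (Complex.I * c) * Complex.exp (Complex.I * t) *
      Complex.exp (-(Complex.I * q)) = Complex.exp (-(Complex.I * p)) := by
    rw [← Complex.exp_add, ← Complex.exp_add]
    congr 1
    have h3 := congrArg (Complex.ofReal) h
    push_cast at h3
    linear_combination Complex.I * h3
  linear_combination (-(z * A * W)) * h2

/-- Translation covariance of the LCST. -/
theorem lcst_translation (A₁ B₁ C₁ D₁ A₂ B₂ C₂ D₂ : ℝ)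
    (hdet₁ : A₁ * D₁ - B₁ * C₁ = 1) (hdet₂ : A₂ * D₂ - B₂ * C₂ = 1)
    (hB₁ : B₁ ≠ 0) (hB₂ : B₂ ≠ 0)
    (f ψ : ℝ → ℂ) (hf : MemLp f 2 (volume : Measure ℝ)) (hψ : MemLp ψ 2 (volume : Measure ℝ))
    (y : ℝ) (a b : ℝ) (ha : 0 < a) :
    LCST A₁ B₁ A₂ B₂ ψ (fun t => f (t - y)) a b =
      Complex.exp (Complex.I * ((-(a * y / B₁) - A₁ / B₁ * y * (b - y) : ℝ) : ℂ)) *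
        LCST A₁ B₁ A₂ B₂ ψ (fun t => Complex.exp (Complex.I * ((A₁ / B₁ * y * t : ℝ) : ℂ)) * f t)
          a (b - y) := by
  unfold LCST
  rw [← integral_const_mul]
  rw [← integral_add_right_eq_self
      (fun x => f (x - y) * (starRingEnd ℂ) (lcstWave A₁ B₁ A₂ B₂ ψ a b x)) y]
  refine integral_congr_ae (Filter.Eventually.of_forall fun x => ?_)
  simp only [add_sub_cancel_right]
  unfold lcstWave
  simp only [map_mul, ← Complex.exp_conj, map_add, map_neg, Complex.conj_I, map_ofNat,
    Complex.conj_ofReal, neg_mul]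
  have harg : a * (x + y - b) = a * (x - (b - y)) := by ring
  rw [harg]
  apply exp_aux
  field_simp
  ring
end

section
/- The LCT of the analyzing function ψ^{M₁,M₂}_{a,b} factorizes as (L^{M₁} ψ^{M₁,M₂}_{a,b})(ξ) = √(2πiB₂) · exp(iab/B₁ − (iD₂/2B₂)(B₂ξ/(B₁a))²) · K_{M₁}(b,ξ) · (L^{M₂}{e^{it/B₁} ψ(t)})(B₂ξ/(B₁a)). -/
open MeasureTheory Set

/-- Factorization of the LCT of the analyzing function `ψ^{M₁,M₂}_{a,b}`. -/
theorem lct_of_lcst_wave (A₁ B₁ C₁ D₁ A₂ B₂ C₂ D₂ : ℝ)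
    (hdet₁ : A₁ * D₁ - B₁ * C₁ = 1) (hdet₂ : A₂ * D₂ - B₂ * C₂ = 1)
    (hB₁ : B₁ ≠ 0) (hB₂ : B₂ ≠ 0)
    (ψ : ℝ → ℂ) (hψ : MemLp ψ 2 (volume : Measure ℝ))
    (a b : ℝ) (ha : 0 < a) (ξ : ℝ) :
    LCT A₁ B₁ D₁ (lcstWave A₁ B₁ A₂ B₂ ψ a b) ξ =
      (2 * Real.pi * Complex.I * (B₂ : ℂ)) ^ ((1:ℂ)/2) *
        Complex.exp (Complex.I *
          ((a * b / B₁ - D₂ / (2 * B₂) * (B₂ * ξ / (B₁ * a)) ^ 2 : ℝ) : ℂ)) *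
        lctKernel A₁ B₁ D₁ b ξ *
        LCT A₂ B₂ D₂ (fun t => Complex.exp (Complex.I * ((t / B₁ : ℝ) : ℂ)) * ψ t)
          (B₂ * ξ / (B₁ * a)) := by
  have ha' : a ≠ 0 := ha.ne'
  set η : ℝ := B₂ * ξ / (B₁ * a) with hη
  have hbase : (2 * Real.pi * Complex.I * (B₂ : ℂ)) ≠ 0 := by
    have h1 : (B₂ : ℂ) ≠ 0 := Complex.ofReal_ne_zero.mpr hB₂
    have hpi : (Real.pi : ℂ) ≠ 0 := Complex.ofReal_ne_zero.mpr Real.pi_ne_zero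
    simp [Complex.I_ne_zero, h1, hpi]
  have hX : (2 * Real.pi * Complex.I * (B₂ : ℂ)) ^ ((1:ℂ)/2) ≠ 0 := by
    rw [Ne, Complex.cpow_eq_zero_iff]
    tauto
  set X₂ : ℂ := (2 * Real.pi * Complex.I * (B₂ : ℂ)) ^ ((1:ℂ)/2) with hX₂
  set C : ℂ := X₂ *
      Complex.exp (Complex.I * ((a * b / B₁ - D₂ / (2 * B₂) * η ^ 2 : ℝ) : ℂ)) *
      lctKernel A₁ B₁ D₁ b ξ with hC
  set g : ℝ → ℂ := fun u =>
    Complex.exp (Complex.I * ((u / B₁ : ℝ) : ℂ)) * ψ u * lctKernel A₂ B₂ D₂ u η with hg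
  have hexp : ∀ (x y : ℝ),
      Complex.exp (Complex.I * (x : ℂ)) * Complex.exp (Complex.I / 2 * (y : ℂ)) =
        Complex.exp (Complex.I * ((x + y / 2 : ℝ) : ℂ)) := by
    intro x y
    rw [← Complex.exp_add]
    congr 1
    push_cast
    ring
  have hexp4 : ∀ (x y u v : ℝ),
      Complex.exp (Complex.I * (x : ℂ)) * Complex.exp (Complex.I / 2 * (y : ℂ)) *
        Complex.exp (Complex.I * (u : ℂ)) * Complex.exp (Complex.I / 2 * (v : ℂ)) =
        Complex.exp (Complex.I * ((x + y / 2 + (u + v / 2) : ℝ) : ℂ)) := by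
    intro x y u v
    rw [← Complex.exp_add, ← Complex.exp_add, ← Complex.exp_add]
    congr 1
    push_cast
    ring
  have key : ∀ t : ℝ,
      lcstWave A₁ B₁ A₂ B₂ ψ a b t * lctKernel A₁ B₁ D₁ t ξ =
        (C * (a : ℂ)) * g (a * t + -(a * b)) := by
    intro t
    have harg : a * t + -(a * b) = a * (t - b) := by ring
    rw [harg]
    have hre : (-(A₁ / (2 * B₁)) * (t ^ 2 - b ^ 2) + A₂ / (2 * B₂) * (a * (t - b)) ^ 2 +
          a * t / B₁) + (A₁ / B₁ * t ^ 2 - 2 / B₁ * ξ * t + D₁ / B₁ * ξ ^ 2) / 2 =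
        (a * b / B₁ - D₂ / (2 * B₂) * η ^ 2) +
            (A₁ / B₁ * b ^ 2 - 2 / B₁ * ξ * b + D₁ / B₁ * ξ ^ 2) / 2 +
          ((a * (t - b)) / B₁ +
            (A₂ / B₂ * (a * (t - b)) ^ 2 - 2 / B₂ * η * (a * (t - b)) +
              D₂ / B₂ * η ^ 2) / 2) := by
      rw [hη]
      field_simp
      ring
    have hXX : X₂ * (1 / X₂) = 1 := by
      field_simp
    simp only [lcstWave, lctKernel, hg, hC]
    calc
      Complex.exp (Complex.I *
            ((-(A₁ / (2 * B₁)) * (t ^ 2 - b ^ 2) + A₂ / (2 * B₂) * (a * (t - b)) ^ 2 +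
                a * t / B₁ : ℝ) : ℂ)) *
            (a : ℂ) * ψ (a * (t - b)) *
          (1 / (2 * Real.pi * Complex.I * (B₁ : ℂ)) ^ ((1:ℂ)/2) *
            Complex.exp (Complex.I / 2 *
              ((A₁ / B₁ * t ^ 2 - 2 / B₁ * ξ * t + D₁ / B₁ * ξ ^ 2 : ℝ) : ℂ)))
          = (1 / (2 * Real.pi * Complex.I * (B₁ : ℂ)) ^ ((1:ℂ)/2)) *
              ((a : ℂ) * ψ (a * (t - b))) *
              (Complex.exp (Complex.I *
                ((-(A₁ / (2 * B₁)) * (t ^ 2 - b ^ 2) + A₂ / (2 * B₂) * (a * (t - b)) ^ 2 +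
                    a * t / B₁ : ℝ) : ℂ)) *
               Complex.exp (Complex.I / 2 *
                ((A₁ / B₁ * t ^ 2 - 2 / B₁ * ξ * t + D₁ / B₁ * ξ ^ 2 : ℝ) : ℂ))) := by
            ring
      _ = (1 / (2 * Real.pi * Complex.I * (B₁ : ℂ)) ^ ((1:ℂ)/2)) *
              ((a : ℂ) * ψ (a * (t - b))) *
              Complex.exp (Complex.I *
                (((a * b / B₁ - D₂ / (2 * B₂) * η ^ 2) +
                    (A₁ / B₁ * b ^ 2 - 2 / B₁ * ξ * b + D₁ / B₁ * ξ ^ 2) / 2 +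
                  ((a * (t - b)) / B₁ +
                    (A₂ / B₂ * (a * (t - b)) ^ 2 - 2 / B₂ * η * (a * (t - b)) +
                      D₂ / B₂ * η ^ 2) / 2) : ℝ) : ℂ)) := by
            rw [hexp, hre]
      _ = (X₂ * Complex.exp (Complex.I * ((a * b / B₁ - D₂ / (2 * B₂) * η ^ 2 : ℝ) : ℂ)) *
              (1 / (2 * Real.pi * Complex.I * (B₁ : ℂ)) ^ ((1:ℂ)/2) *
                Complex.exp (Complex.I / 2 *
                  ((A₁ / B₁ * b ^ 2 - 2 / B₁ * ξ * b + D₁ / B₁ * ξ ^ 2 : ℝ) : ℂ))) *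
              (a : ℂ)) *
            (Complex.exp (Complex.I * ((a * (t - b) / B₁ : ℝ) : ℂ)) * ψ (a * (t - b)) *
              (1 / (2 * Real.pi * Complex.I * (B₂ : ℂ)) ^ ((1:ℂ)/2) *
                Complex.exp (Complex.I / 2 *
                  ((A₂ / B₂ * (a * (t - b)) ^ 2 - 2 / B₂ * η * (a * (t - b)) +
                    D₂ / B₂ * η ^ 2 : ℝ) : ℂ)))) := by
            rw [← hX₂]
            rw [show (X₂ * Complex.exp (Complex.I *
                  ((a * b / B₁ - D₂ / (2 * B₂) * η ^ 2 : ℝ) : ℂ)) *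
                (1 / (2 * Real.pi * Complex.I * (B₁ : ℂ)) ^ ((1:ℂ)/2) *
                  Complex.exp (Complex.I / 2 *
                    ((A₁ / B₁ * b ^ 2 - 2 / B₁ * ξ * b + D₁ / B₁ * ξ ^ 2 : ℝ) : ℂ))) *
                (a : ℂ)) *
              (Complex.exp (Complex.I * ((a * (t - b) / B₁ : ℝ) : ℂ)) * ψ (a * (t - b)) *
                (1 / X₂ *
                  Complex.exp (Complex.I / 2 *
                    ((A₂ / B₂ * (a * (t - b)) ^ 2 - 2 / B₂ * η * (a * (t - b)) +
                      D₂ / B₂ * η ^ 2 : ℝ) : ℂ)))) =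
              (1 / (2 * Real.pi * Complex.I * (B₁ : ℂ)) ^ ((1:ℂ)/2)) *
                ((a : ℂ) * ψ (a * (t - b))) * (X₂ * (1 / X₂)) *
                (Complex.exp (Complex.I *
                    ((a * b / B₁ - D₂ / (2 * B₂) * η ^ 2 : ℝ) : ℂ)) *
                  Complex.exp (Complex.I / 2 *
                    ((A₁ / B₁ * b ^ 2 - 2 / B₁ * ξ * b + D₁ / B₁ * ξ ^ 2 : ℝ) : ℂ)) *
                  Complex.exp (Complex.I * ((a * (t - b) / B₁ : ℝ) : ℂ)) *
                  Complex.exp (Complex.I / 2 *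
                    ((A₂ / B₂ * (a * (t - b)) ^ 2 - 2 / B₂ * η * (a * (t - b)) +
                      D₂ / B₂ * η ^ 2 : ℝ) : ℂ))) from by ring]
            rw [hXX, mul_one, hexp4]
  have hR : LCT A₂ B₂ D₂ (fun t => Complex.exp (Complex.I * ((t / B₁ : ℝ) : ℂ)) * ψ t) η =
      ∫ u : ℝ, g u := rfl
  rw [hR]
  unfold LCT
  simp only [key]
  rw [MeasureTheory.integral_const_mul]
  have h1 : (∫ t : ℝ, g (a * t + -(a * b))) = |a⁻¹| • ∫ x : ℝ, g (x + -(a * b)) :=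
    MeasureTheory.Measure.integral_comp_mul_left (fun x => g (x + -(a * b))) a
  rw [h1, MeasureTheory.integral_add_right_eq_self g (-(a * b)), abs_inv, abs_of_pos ha,
    Complex.real_smul]
  push_cast
  have haC : (a : ℂ) ≠ 0 := Complex.ofReal_ne_zero.mpr ha'
  rw [hC]
  field_simp
end
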